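/- Let A : Matrix (Fin n) (Fin n) ℝ with fill relation F, and for each vertex k let P_k := {i : k < i ∧ F k i} be the strictly lower pattern of column k of the factor. Then for every k, P_k equals the union of {i : k < i ∧ (A k i ≠ 0 ∨ A i k ≠ 0)} with the sets {i : k < i ∧ F j i} taken over all j such that parent j = k. (This is the correctness of the column fill-in computation that supplements column k with the entries of A and with the patterns of the children of k in the elimination tree.) -/

import Mathlib

/-- The undirected graph `G(A)` of a square real matrix `A`: `i` is adjacent to `j` iff
`i ≠ j` and (`A i j ≠ 0` or `A j i ≠ 0`). -/
def graphOf {n : ℕ} (A : Matrix (Fin n) (Fin n) ℝ) : SimpleGraph (Fin n) where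
  Adj i j := i ≠ j ∧ (A i j ≠ 0 ∨ A j i ≠ 0)
  symm := by
    constructor
    intro i j h
    exact ⟨h.1.symm, h.2.symm⟩
  loopless := by
    constructor
    intro i h
    exact h.1 rfl

/-- The fill relation of `A`: `fill A i j` iff `i ≠ j` and there is a walk from `i` to
`j` in `G(A)` all of whose interior vertices `u` satisfy `u < i` and `u < j`. -/
def fill {n : ℕ} (A : Matrix (Fin n) (Fin n) ℝ) (i j : Fin n) : Prop :=
  i ≠ j ∧ ∃ w : (graphOf A).Walk i j, ∀ u ∈ w.support.tail.dropLast, u < i ∧ u < j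

namespace ColPatAux

open SimpleGraph

variable {V : Type*} {G : SimpleGraph V}

lemma dropLast_reverse' {α : Type*} (l : List α) : l.reverse.dropLast = l.tail.reverse := by
  rw [← List.reverse_reverse (l.reverse.dropLast), ← List.tail_reverse, List.reverse_reverse]

/-- The interior of the reverse walk is the reverse of the interior. -/
lemma interior_reverse {a b : V} (p : G.Walk a b) :
    p.reverse.support.tail.dropLast = (p.support.tail.dropLast).reverse := by
  rw [Walk.support_reverse, List.tail_reverse, dropLast_reverse', List.tail_dropLast]

/-- Any vertex in the tail of a walk's support is interior or the final endpoint. -/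
lemma mem_tail_cases {a b : V} (p : G.Walk a b) {u : V} (h : u ∈ p.support.tail) :
    u ∈ p.support.tail.dropLast ∨ u = b := by
  have hne : p.support.tail ≠ [] := List.ne_nil_of_mem h
  have hlast : p.support.tail.getLast hne = b := by
    rw [List.getLast_tail]; exact p.getLast_support
  rw [← List.dropLast_append_getLast hne, hlast] at h
  rcases List.mem_append.1 h with h1 | h1
  · exact Or.inl h1
  · exact Or.inr (List.mem_singleton.1 h1)

/-- Interior vertices of an appended walk. -/
lemma mem_interior_append {a b c : V} (p : G.Walk a b) (q : G.Walk b c) {u : V}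
    (h : u ∈ (p.append q).support.tail.dropLast) :
    u ∈ p.support.tail.dropLast ∨ u = b ∨ u ∈ q.support.tail.dropLast := by
  rw [Walk.support_append, List.tail_append_of_ne_nil p.support_ne_nil] at h
  by_cases hq : q.support.tail = []
  · rw [hq, List.append_nil] at h
    exact Or.inl h
  · rw [List.dropLast_append_of_ne_nil hq] at h
    rcases List.mem_append.1 h with h1 | h1
    · rcases mem_tail_cases p h1 with h2 | h2
      exacts [Or.inl h2, Or.inr (Or.inl h2)]
    · exact Or.inr (Or.inr h1)

lemma fill_of_adj {n : ℕ} (A : Matrix (Fin n) (Fin n) ℝ) {a b : Fin n}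
    (h : (graphOf A).Adj a b) : fill A a b :=
  ⟨h.1, h.toWalk, by simp [Walk.support_cons]⟩

/-- The "concatenation" lemma: two fills from a smaller vertex give a fill. -/
lemma fill_trans_aux {n : ℕ} (A : Matrix (Fin n) (Fin n) ℝ) {j u v : Fin n}
    (hju : j < u) (hjv : j < v) (huv : u ≠ v)
    (h1 : fill A j u) (h2 : fill A j v) : fill A u v := by
  obtain ⟨-, w1, hw1⟩ := h1
  obtain ⟨-, w2, hw2⟩ := h2
  refine ⟨huv, w1.reverse.append w2, ?_⟩
  intro x hx
  rcases mem_interior_append _ _ hx with h | h | h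
  · rw [interior_reverse, List.mem_reverse] at h
    exact ⟨(hw1 x h).1.trans hju, (hw1 x h).1.trans hjv⟩
  · subst h; exact ⟨hju, hjv⟩
  · exact ⟨(hw2 x h).1.trans hju, (hw2 x h).1.trans hjv⟩

/-- A walk with no interior vertices between distinct vertices is an edge. -/
lemma adj_of_interior_nil {a b : V} (w : G.Walk a b) (hne : a ≠ b)
    (h : w.support.tail.dropLast = []) : G.Adj a b := by
  cases w with
  | nil => exact absurd rfl hne
  | @cons _ v _ e w' =>
    cases w' with
    | nil => exact e
    | @cons _ v2 _ e2 w'' =>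
      rw [Walk.support_cons, List.tail_cons, Walk.support_cons,
        List.dropLast_cons_of_ne_nil (Walk.support_ne_nil _)] at h
      exact absurd h (by simp)

lemma interior_takeUntil_subset [DecidableEq V] {a b c : V} (p : G.Walk a b)
    (h : c ∈ p.support) (hcb : c ≠ b) :
    (p.takeUntil c h).support.tail.dropLast ⊆ p.support.tail.dropLast := by
  intro u hu
  have hsupp : p.support = (p.takeUntil c h).support ++ (p.dropUntil c h).support.tail := by
    conv_lhs => rw [← p.take_spec h]
    exact Walk.support_append _ _
  have hq : (p.dropUntil c h).support.tail ≠ [] := by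
    intro h0
    have hb := Walk.end_mem_support (p.dropUntil c h)
    rw [Walk.support_eq_cons, h0] at hb
    exact hcb (List.mem_singleton.1 hb).symm
  rw [hsupp, List.tail_append_of_ne_nil (Walk.support_ne_nil _),
    List.dropLast_append_of_ne_nil hq]
  exact List.mem_append_left _ (List.dropLast_subset _ hu)

lemma not_mem_interior_takeUntil [DecidableEq V] {a b c : V} (p : G.Walk a b)
    (h : c ∈ p.support) : c ∉ (p.takeUntil c h).support.tail.dropLast := by
  intro hc
  have hcount := p.count_support_takeUntil_eq_one h
  set q := p.takeUntil c h with hqdef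
  have htne : q.support.tail ≠ [] := List.ne_nil_of_mem (List.dropLast_subset _ hc)
  have hlast : q.support.tail.getLast htne = c := by
    rw [List.getLast_tail]; exact q.getLast_support
  have h2 : q.support.tail = q.support.tail.dropLast ++ [c] := by
    conv_lhs => rw [← List.dropLast_append_getLast htne, hlast]
  have hcp : 0 < (q.support.tail.dropLast).count c := List.count_pos_iff.2 hc
  have h3 : 2 ≤ q.support.tail.count c := by
    rw [h2, List.count_append]
    have hone : List.count c [c] = 1 := by simp
    omega
  have h4 : q.support.tail.count c ≤ q.support.count c := by
    conv_rhs => rw [q.support_eq_cons]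
    rw [List.count_cons]
    omega
  omega

/-- Splitting a fill walk at its maximal interior vertex. -/
lemma exists_split {n : ℕ} (A : Matrix (Fin n) (Fin n) ℝ) {k i : Fin n} (hki : k < i)
    (w : (graphOf A).Walk k i) (hw : ∀ u ∈ w.support.tail.dropLast, u < k ∧ u < i)
    (hne : w.support.tail.dropLast ≠ []) :
    ∃ j, j < k ∧ fill A j k ∧ fill A j i := by
  classical
  set L := w.support.tail.dropLast with hL
  obtain ⟨x, hx⟩ := List.exists_mem_of_ne_nil L hne
  have hT : L.toFinset.Nonempty := ⟨x, List.mem_toFinset.2 hx⟩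
  set j := L.toFinset.max' hT with hjdef
  have hjmem : j ∈ L := List.mem_toFinset.1 (L.toFinset.max'_mem hT)
  have hjmax : ∀ u ∈ L, u ≤ j := fun u hu => L.toFinset.le_max' u (List.mem_toFinset.2 hu)
  have hjk : j < k := (hw j hjmem).1
  have hji : j < i := (hw j hjmem).2
  have hjS : j ∈ w.support := List.mem_of_mem_tail (List.dropLast_subset _ hjmem)
  refine ⟨j, hjk, ?_, ?_⟩
  · refine ⟨hjk.ne, (w.takeUntil j hjS).reverse, ?_⟩
    intro u hu
    rw [interior_reverse, List.mem_reverse] at hu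
    have hsub : u ∈ L := interior_takeUntil_subset w hjS hji.ne hu
    have huj : u ≠ j := fun h => not_mem_interior_takeUntil w hjS (h ▸ hu)
    exact ⟨lt_of_le_of_ne (hjmax u hsub) huj, (hw u hsub).1⟩
  · have hjS' : j ∈ w.reverse.support := by
      rw [Walk.support_reverse]; exact List.mem_reverse.2 hjS
    refine ⟨hji.ne, (w.reverse.takeUntil j hjS').reverse, ?_⟩
    intro u hu
    rw [interior_reverse, List.mem_reverse] at hu
    have hsub : u ∈ w.reverse.support.tail.dropLast :=
      interior_takeUntil_subset w.reverse hjS' hjk.ne hu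
    rw [interior_reverse, List.mem_reverse] at hsub
    have huj : u ≠ j := fun h => not_mem_interior_takeUntil w.reverse hjS' (h ▸ hu)
    exact ⟨lt_of_le_of_ne (hjmax u hsub) huj, (hw u hsub).2⟩

end ColPatAux

open ColPatAux

/-- for every vertex `k`, the strictly lower pattern
`P_k = {i | k < i ∧ fill A k i}` of column `k` equals the set of entries of `A` in
column `k` below the diagonal, united with the patterns `{i | k < i ∧ fill A j i}` of
all children `j` of `k` in the elimination tree (`j` is a child of `k` iff `k` is the
least element of `{u | j < u ∧ fill A j u}`). -/
theorem column_pattern_eq {n : ℕ} (A : Matrix (Fin n) (Fin n) ℝ) (k : Fin n) :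
    {i : Fin n | k < i ∧ fill A k i} =
      {i : Fin n | k < i ∧ (A k i ≠ 0 ∨ A i k ≠ 0)} ∪
        ⋃ j ∈ {j : Fin n | IsLeast {u : Fin n | j < u ∧ fill A j u} k},
          {i : Fin n | k < i ∧ fill A j i} := by
  classical
  ext i
  simp only [Set.mem_setOf_eq, Set.mem_union, Set.mem_iUnion, exists_prop]
  constructor
  · rintro ⟨hki, hfill⟩
    by_cases hadj : (graphOf A).Adj k i
    · exact Or.inl ⟨hki, hadj.2⟩
    · right
      obtain ⟨hne, w, hw⟩ := hfill
      have hint : w.support.tail.dropLast ≠ [] := fun h0 =>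
        hadj (adj_of_interior_nil w hne h0)
      obtain ⟨j0, hj0k, hj0kf, hj0if⟩ := exists_split A hki w hw hint
      set S : Finset (Fin n) :=
        Finset.univ.filter (fun j => j < k ∧ fill A j k ∧ fill A j i) with hS
      have hSn : S.Nonempty := ⟨j0, by simp [hS, hj0k, hj0kf, hj0if]⟩
      set j := S.max' hSn with hj
      have hjmem : j < k ∧ fill A j k ∧ fill A j i := by
        exact (Finset.mem_filter.1 (S.max'_mem hSn)).2
      refine ⟨j, ⟨⟨hjmem.1, hjmem.2.1⟩, ?_⟩, hki, hjmem.2.2⟩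
      rintro u ⟨hju, hfu⟩
      by_contra hku
      push_neg at hku
      have huk : u < k := hku
      have h1 : fill A u k := fill_trans_aux A hju hjmem.1 huk.ne hfu hjmem.2.1
      have h2 : fill A u i :=
        fill_trans_aux A hju (hjmem.1.trans hki) (huk.trans hki).ne hfu hjmem.2.2
      have huS : u ∈ S := by simp [hS]; exact ⟨huk, h1, h2⟩
      exact absurd (S.le_max' u huS) (not_le.2 hju)
  · rintro (⟨hki, ha⟩ | ⟨j, hleast, hki, hfill⟩)
    · exact ⟨hki, fill_of_adj A ⟨hki.ne, ha⟩⟩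
    · obtain ⟨⟨hjk, hfjk⟩, -⟩ := hleast
      exact ⟨hki, fill_trans_aux A hjk (hjk.trans hki) hki.ne hfjk hfill⟩
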